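/- Let V ⊆ ℂ^d be a set of n points and V^ℓ ⊆ ℂ^{dℓ} its ℓ-fold Cartesian product. If H ⊆ ℂ^{dℓ} is an affine hyperplane with |H ∩ V^ℓ| ≥ δ·n^ℓ for some δ > 0, then there exists an affine hyperplane H' ⊆ ℂ^d with |H' ∩ V| ≥ δ·n. -/

import Mathlib

/-- If an affine hyperplane `H ⊆ ℂ^{dℓ}` contains at least `δ·n^ℓ` points of the
`ℓ`-fold product `V^ℓ` of an `n`-point set `V ⊆ ℂ^d`, then some affine hyperplane
`H' ⊆ ℂ^d` contains at least `δ·n` points of `V`. -/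
theorem stmt1 (d ℓ : ℕ) (V : Finset (Fin d → ℂ)) (δ : ℝ) (hδ : 0 < δ)
    (φ : (Fin ℓ → Fin d → ℂ) →ₗ[ℂ] ℂ) (hφ : φ ≠ 0) (b : ℂ)
    (h : (Set.ncard {x : Fin ℓ → Fin d → ℂ | (∀ j, x j ∈ V) ∧ φ x = b} : ℝ)
        ≥ δ * (V.card : ℝ) ^ ℓ) :
    ∃ (ψ : (Fin d → ℂ) →ₗ[ℂ] ℂ) (c : ℂ), ψ ≠ 0 ∧
      (Set.ncard {v : Fin d → ℂ | v ∈ V ∧ ψ v = c} : ℝ) ≥ δ * (V.card : ℝ) := by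
  classical
  -- decompose φ and find a nonzero component
  have hdecomp : ∀ x : Fin ℓ → Fin d → ℂ, x = ∑ j, Pi.single j (x j) := by
    intro x
    funext i
    rw [Finset.sum_apply]
    exact (Fintype.sum_pi_single i x).symm
  have hj : ∃ j : Fin ℓ,
      φ.comp (LinearMap.single ℂ (fun _ : Fin ℓ => Fin d → ℂ) j) ≠ 0 := by
    by_contra hc
    push_neg at hc
    apply hφ
    refine LinearMap.ext fun x => ?_
    have : φ x = ∑ j, φ (Pi.single j (x j)) := by
      conv_lhs => rw [hdecomp x]
      exact map_sum φ _ _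
    rw [LinearMap.zero_apply, this]
    refine Finset.sum_eq_zero fun j _ => ?_
    have := LinearMap.congr_fun (hc j) (x j)
    simpa using this
  obtain ⟨j, hψ⟩ := hj
  set ψ := φ.comp (LinearMap.single ℂ (fun _ : Fin ℓ => Fin d → ℂ) j) with hψdef
  have hℓ : 0 < ℓ := j.pos
  set n := V.card with hn
  -- the set in the hypothesis as a Finset
  set T : Finset (Fin ℓ → Fin d → ℂ) :=
    (Fintype.piFinset fun _ : Fin ℓ => V).filter (fun x => φ x = b) with hT
  have hTset : {x : Fin ℓ → Fin d → ℂ | (∀ j, x j ∈ V) ∧ φ x = b} = ↑T := by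
    ext x
    simp [hT, Fintype.mem_piFinset]
  rw [hTset, Set.ncard_coe_finset] at h
  -- sets in the goal as Finsets
  have hBset : ∀ c : ℂ, {v : Fin d → ℂ | v ∈ V ∧ ψ v = c}
      = ↑(V.filter fun v => ψ v = c) := by
    intro c; ext v; simp
  -- trivial case n = 0
  by_cases hn0 : n = 0
  · refine ⟨ψ, 0, hψ, ?_⟩
    rw [hn0]
    simp
  have hnpos : 0 < n := Nat.pos_of_ne_zero hn0
  -- main case: argue by contradiction
  by_contra hcon
  push_neg at hcon
  have hB : ∀ c : ℂ, ((V.filter fun v => ψ v = c).card : ℝ) < δ * n := by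
    intro c
    have := hcon ψ c hψ
    rwa [hBset c, Set.ncard_coe_finset] at this
  -- fibering map: zero out the j-th coordinate
  set g : (Fin ℓ → Fin d → ℂ) → (Fin ℓ → Fin d → ℂ) :=
    fun x => Function.update x j 0 with hg
  have hsplit : ∀ x : Fin ℓ → Fin d → ℂ, x = g x + Pi.single j (x j) := by
    intro x
    funext i
    by_cases hij : i = j
    · subst hij; simp [hg]
    · simp [hg, Function.update_of_ne hij, Pi.single_eq_of_ne hij]
  have hφsplit : ∀ x : Fin ℓ → Fin d → ℂ, φ x = φ (g x) + ψ (x j) := by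
    intro x
    conv_lhs => rw [hsplit x]
    rw [map_add]
    rfl
  have hcard : T.card = ∑ y ∈ T.image g, (T.filter fun x => g x = y).card :=
    Finset.card_eq_sum_card_fiberwise (fun x hx => Finset.mem_image_of_mem g hx)
  -- each fiber injects into a hyperplane section of V
  have hfiber : ∀ y ∈ T.image g,
      (T.filter fun x => g x = y).card ≤ (V.filter fun v => ψ v = b - φ y).card := by
    intro y _
    apply Finset.card_le_card_of_injOn (fun x => x j)
    · intro x hx
      rw [Finset.mem_coe, Finset.mem_filter] at hx
      obtain ⟨hxT, hxg⟩ := hx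
      rw [hT, Finset.mem_filter, Fintype.mem_piFinset] at hxT
      rw [Finset.mem_coe, Finset.mem_filter]
      refine ⟨hxT.1 j, ?_⟩
      have := hφsplit x
      rw [hxT.2, hxg] at this
      linear_combination -this
    · intro x₁ hx₁ x₂ hx₂ hj12
      simp only [Finset.coe_filter, Set.mem_setOf_eq] at hx₁ hx₂
      funext i
      by_cases hij : i = j
      · subst hij; exact hj12
      · have e1 : x₁ i = y i := by
          rw [← hx₁.2]; simp [hg, Function.update_of_ne hij]
        have e2 : x₂ i = y i := by
          rw [← hx₂.2]; simp [hg, Function.update_of_ne hij]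
        rw [e1, e2]
  -- the number of fibers is at most n^(ℓ-1)
  have himg : (T.image g).card ≤ n ^ (ℓ - 1) := by
    have hinj : (T.image g).card ≤
        (Fintype.piFinset (fun _ : {i : Fin ℓ // i ≠ j} => V)).card := by
      apply Finset.card_le_card_of_injOn (fun y => fun i : {i : Fin ℓ // i ≠ j} => y i.1)
      · intro y hy
        rw [Finset.mem_coe, Finset.mem_image] at hy
        obtain ⟨x, hxT, rfl⟩ := hy
        rw [hT, Finset.mem_filter, Fintype.mem_piFinset] at hxT
        rw [Finset.mem_coe, Fintype.mem_piFinset]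
        intro i
        simpa [hg, Function.update_of_ne i.2] using hxT.1 i.1
      · intro y₁ hy₁ y₂ hy₂ hres
        rw [Finset.coe_image, Set.mem_image] at hy₁ hy₂
        obtain ⟨x₁, _, rfl⟩ := hy₁
        obtain ⟨x₂, _, rfl⟩ := hy₂
        funext i
        by_cases hij : i = j
        · subst hij; simp [hg]
        · have := congrFun hres ⟨i, hij⟩
          simpa using this
    have hcardpi : (Fintype.piFinset (fun _ : {i : Fin ℓ // i ≠ j} => V)).card
        = n ^ (ℓ - 1) := by
      rw [Fintype.card_piFinset]
      rw [Finset.prod_const, Finset.card_univ]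
      congr 1
      rw [Fintype.card_subtype_compl, Fintype.card_subtype_eq, Fintype.card_fin]
    rw [hcardpi] at hinj
    exact hinj
  -- T is nonempty
  have hTne : (T.image g).Nonempty := by
    rw [Finset.image_nonempty, ← Finset.card_pos]
    by_contra hTe
    push_neg at hTe
    have hz : T.card = 0 := Nat.le_zero.mp hTe
    rw [hz] at h
    push_cast at h
    have : (0 : ℝ) < δ * (n : ℝ) ^ ℓ := mul_pos hδ (pow_pos (by exact_mod_cast hnpos) _)
    linarith
  -- final counting
  have hsum : (T.card : ℝ) < (T.image g).card * (δ * n) := by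
    rw [hcard]
    push_cast
    calc ∑ y ∈ T.image g, ((T.filter fun x => g x = y).card : ℝ)
        < ∑ _y ∈ T.image g, δ * n := by
          apply Finset.sum_lt_sum_of_nonempty hTne
          intro y hy
          exact lt_of_le_of_lt (by exact_mod_cast hfiber y hy) (hB (b - φ y))
      _ = (T.image g).card * (δ * n) := by rw [Finset.sum_const, nsmul_eq_mul]
  have hfinal : ((T.image g).card : ℝ) * (δ * n) ≤ δ * (n : ℝ) ^ ℓ := by
    have h1 : ((T.image g).card : ℝ) ≤ (n : ℝ) ^ (ℓ - 1) := by exact_mod_cast himg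
    have h2 : (n : ℝ) ^ (ℓ - 1) * n = (n : ℝ) ^ ℓ := by
      rw [← pow_succ, Nat.sub_add_cancel hℓ]
    calc ((T.image g).card : ℝ) * (δ * n) ≤ (n : ℝ) ^ (ℓ - 1) * (δ * n) := by
          apply mul_le_mul_of_nonneg_right h1; exact mul_nonneg hδ.le (Nat.cast_nonneg _)
      _ = δ * (n : ℝ) ^ ℓ := by rw [← h2]; ring
  linarith
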